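/- The discrete KdV map preserves the quantities xu and αx + x^{−1} + βu + u^{−1}: if (y,v) = F(x,u) then xu = yv and αx + x^{−1} + βu + u^{−1} = αy + y^{−1} + βv + v^{−1}. -/

import Mathlib

theorem dKdV_conserved_quantities (α β : ℝ) (hα : 0 ≤ α) (hβ : 0 ≤ β)
    (x u : ℝ) (hx : 0 < x) (hu : 0 < u)
    (y v : ℝ)
    (hy : y = u * (1 + β * x * u) / (1 + α * x * u))
    (hv : v = x * (1 + α * x * u) / (1 + β * x * u)) :
    x * u = y * v ∧
      α * x + x⁻¹ + β * u + u⁻¹ = α * y + y⁻¹ + β * v + v⁻¹ := by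
  have ha : (0:ℝ) < 1 + α * x * u := by positivity
  have hb : (0:ℝ) < 1 + β * x * u := by positivity
  constructor
  · rw [hy, hv]; field_simp
  · rw [hy, hv]
    rw [inv_div, inv_div]
    field_simp
    ring
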